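/- Let B be a real n×n matrix with det B ≤ 0, let R be the unique symmetric positive semidefinite square root of Bᵀ B, and suppose the smallest eigenvalue of R has multiplicity 1. Then there is exactly one Q ∈ SO(n) maximizing trace(Qᵀ B) over SO(n). -/

import Mathlib

open Matrix Module

section
variable {n : ℕ}

lemma aux_sq_sum_col {N : Matrix (Fin n) (Fin n) ℝ} (h : Nᵀ * N = 1) (i : Fin n) :
    ∑ k, (N k i)^2 = 1 := by
  have := congrFun (congrFun h i) i
  simpa [Matrix.mul_apply, Matrix.one_apply, pow_two] using this

lemma aux_diag_le_one {N : Matrix (Fin n) (Fin n) ℝ} (h : Nᵀ * N = 1) (i : Fin n) :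
    N i i ≤ 1 := by
  have h1 := aux_sq_sum_col h i
  have h2 : (N i i)^2 ≤ 1 := by
    rw [← h1]
    exact Finset.single_le_sum (fun k _ => sq_nonneg (N k i)) (Finset.mem_univ i)
  nlinarith

lemma aux_basis_matrix {b : OrthonormalBasis (Fin n) ℝ (EuclideanSpace ℝ (Fin n))} :
    (Matrix.of fun k i => b i k)ᵀ * (Matrix.of fun k i => b i k) = 1 := by
  ext i k
  have h := b.orthonormal
  rw [orthonormal_iff_ite] at h
  have := h i k
  simp only [PiLp.inner_apply, RCLike.inner_apply, starRingEnd_apply, star_trivial] at this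
  simpa [Matrix.mul_apply, Matrix.one_apply, mul_comm] using this

lemma aux_trace_le {N : Matrix (Fin n) (Fin n) ℝ}
    (h : Nᵀ * N = 1) (hd : N.det = -1) : N.trace ≤ (n : ℝ) - 2 := by
  have hNNT : N * Nᵀ = 1 := mul_eq_one_comm.mp h
  have hdet0 : (N + 1).det = 0 := by
    have e : N + 1 = N * (1 + Nᵀ) := by rw [mul_add, mul_one, hNNT]
    have e2 : (N + 1).det = -(N + 1).det := by
      calc (N + 1).det = N.det * (1 + Nᵀ).det := by rw [e, det_mul]
        _ = -((1 + N)ᵀ).det := by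
            rw [hd, Matrix.transpose_add, Matrix.transpose_one]; ring
        _ = -(N + 1).det := by rw [Matrix.det_transpose, add_comm]
    linarith
  obtain ⟨v, hv0, hv⟩ := (Matrix.exists_mulVec_eq_zero_iff).mpr hdet0
  have hNv : N *ᵥ v = -v := by
    have := hv
    rw [Matrix.add_mulVec, Matrix.one_mulVec] at this
    exact eq_neg_of_add_eq_zero_left this
  obtain ⟨j₁, hj₁⟩ := Function.ne_iff.mp hv0
  -- normalize
  set c : ℝ := ∑ k, v k * v k with hc_def
  have hcpos : 0 < c := by
    have h1 : (v j₁) * (v j₁) ≤ c := by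
      rw [hc_def]
      exact Finset.single_le_sum (f := fun k => v k * v k)
        (fun k _ => mul_self_nonneg (v k)) (Finset.mem_univ j₁)
    have h2 : v j₁ ≠ 0 := by simpa using hj₁
    nlinarith [mul_self_pos.mpr h2]
  set u : EuclideanSpace ℝ (Fin n) := (Real.sqrt c)⁻¹ • (WithLp.toLp 2 v : EuclideanSpace ℝ (Fin n)) with hu_def
  have huk : ∀ k, u k = (Real.sqrt c)⁻¹ * v k := fun k => rfl
  have hNu : N *ᵥ (u : Fin n → ℝ) = -(u : Fin n → ℝ) := by
    show N *ᵥ ((Real.sqrt c)⁻¹ • v) = _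
    rw [Matrix.mulVec_smul, hNv]
    ext k
    show (Real.sqrt c)⁻¹ * (-v k) = -((Real.sqrt c)⁻¹ * v k)
    ring
  have hsqrt : Real.sqrt c * Real.sqrt c = c := Real.mul_self_sqrt hcpos.le
  have hsqrtne : Real.sqrt c ≠ 0 := by positivity
  have husq : ∑ k, u k * u k = 1 := by
    simp only [huk]
    rw [show ∑ k, (Real.sqrt c)⁻¹ * v k * ((Real.sqrt c)⁻¹ * v k)
        = ((Real.sqrt c)⁻¹ * (Real.sqrt c)⁻¹) * ∑ k, v k * v k by
      rw [Finset.mul_sum]; apply Finset.sum_congr rfl; intro k _; ring]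
    rw [← hc_def]
    field_simp
    rw [Real.sq_sqrt hcpos.le]
  have hunorm : ‖u‖ = 1 := by
    have hinner : (inner ℝ u u : ℝ)
        = 1 := by
      simp only [PiLp.inner_apply, RCLike.inner_apply, starRingEnd_apply, star_trivial]
      exact husq
    have h2 := real_inner_self_eq_norm_mul_norm u
    rw [hinner] at h2
    nlinarith [norm_nonneg u]
  -- orthonormal basis containing u
  have hcard : finrank ℝ (EuclideanSpace ℝ (Fin n)) = Fintype.card (Fin n) := by
    simp [finrank_euclideanSpace]
  have horth : Orthonormal ℝ
      (Set.restrict {j₁} (fun _ : Fin n => u)) := by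
    constructor
    · intro i; exact hunorm
    · intro i k hik
      exact absurd (Subtype.ext (i.2.trans k.2.symm)) hik
  obtain ⟨b, hb⟩ := horth.exists_orthonormalBasis_extension_of_card_eq hcard
  have hbj : b j₁ = u := hb j₁ rfl
  set C : Matrix (Fin n) (Fin n) ℝ := Matrix.of fun k i => b i k with hC_def
  have hC : Cᵀ * C = 1 := aux_basis_matrix
  have hCCT : C * Cᵀ = 1 := mul_eq_one_comm.mp hC
  set M : Matrix (Fin n) (Fin n) ℝ := Cᵀ * N * C with hM_def
  have hMtr : M.trace = N.trace := by
    rw [hM_def, Matrix.trace_mul_cycle, hCCT, Matrix.one_mul]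
  have hMorth : Mᵀ * M = 1 := by
    rw [hM_def]
    calc (Cᵀ * N * C)ᵀ * (Cᵀ * N * C) = Cᵀ * Nᵀ * (C * Cᵀ) * N * C := by
          simp only [Matrix.transpose_mul, Matrix.transpose_transpose, Matrix.mul_assoc]
      _ = Cᵀ * (Nᵀ * N) * C := by rw [hCCT]; simp only [Matrix.mul_assoc, Matrix.mul_one]
      _ = 1 := by rw [h, Matrix.mul_one, hC]
  have hMjj : M j₁ j₁ = -1 := by
    have e1 : M j₁ j₁ = ∑ m, (∑ k, u k * N k m) * u m := by
      simp only [hM_def, Matrix.mul_apply, Matrix.transpose_apply, hC_def, Matrix.of_apply, hbj]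
    have e3 : M j₁ j₁ = ∑ k, u k * (N *ᵥ u) k := by
      rw [e1]
      simp only [Finset.sum_mul]
      rw [Finset.sum_comm]
      apply Finset.sum_congr rfl
      intro k _
      simp only [Matrix.mulVec, dotProduct, Finset.mul_sum]
      apply Finset.sum_congr rfl
      intro m _; ring
    rw [e3, hNu]
    calc ∑ x, u x * (-u) x = ∑ x, -(u x * u x) :=
          Finset.sum_congr rfl (fun x _ => by show u x * (-(u x)) = _; ring)
      _ = -1 := by rw [Finset.sum_neg_distrib, husq]
  have hn1 : 0 < n := j₁.pos
  have hfin : M.trace ≤ (n : ℝ) - 2 := by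
    have hdle : ∀ i, M i i ≤ 1 := aux_diag_le_one hMorth
    have hsplit : M.trace = M j₁ j₁ + ∑ i ∈ Finset.univ.erase j₁, M i i := by
      rw [Matrix.trace]
      exact (Finset.add_sum_erase _ _ (Finset.mem_univ j₁)).symm
    rw [hsplit, hMjj]
    have hsum : ∑ i ∈ Finset.univ.erase j₁, M i i ≤ (n : ℝ) - 1 := by
      calc ∑ i ∈ Finset.univ.erase j₁, M i i ≤ ∑ i ∈ Finset.univ.erase j₁, (1:ℝ) :=
            Finset.sum_le_sum (fun i _ => hdle i)
        _ = ((Finset.univ.erase j₁).card : ℝ) := by simp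
        _ = (n : ℝ) - 1 := by
            rw [Finset.card_erase_of_mem (Finset.mem_univ j₁)]
            simp [Nat.cast_sub hn1]
    linarith
  linarith [hMtr ▸ hfin]

lemma aux_sq_sum_row {N : Matrix (Fin n) (Fin n) ℝ} (h : Nᵀ * N = 1) (i : Fin n) :
    ∑ k, (N i k)^2 = 1 := by
  have hNNT : (Nᵀ)ᵀ * Nᵀ = 1 := by
    rw [Matrix.transpose_transpose]; exact mul_eq_one_comm.mp h
  simpa using aux_sq_sum_col hNNT i

lemma aux_trace_mul_diag (N : Matrix (Fin n) (Fin n) ℝ) (μ : Fin n → ℝ) :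
    (N * diagonal μ).trace = ∑ i, N i i * μ i := by
  simp [Matrix.trace, Matrix.diag, Matrix.mul_diagonal]

lemma aux_rigid {N : Matrix (Fin n) (Fin n) ℝ} {j : Fin n} (ho : Nᵀ * N = 1) (hd : N.det = -1)
    (hdiag : ∀ i, i ≠ j → N i i = 1) :
    N = diagonal (fun i => if i = j then -1 else 1) := by
  have hcol : ∀ i, i ≠ j → ∀ k, k ≠ i → N k i = 0 := by
    intro i hi k hk
    have h1 := aux_sq_sum_col ho i
    have h2 : ∑ m ∈ Finset.univ.erase i, (N m i)^2 = 0 := by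
      have h3 := Finset.add_sum_erase Finset.univ (fun m => (N m i)^2) (Finset.mem_univ i)
      rw [h1] at h3
      beta_reduce at h3
      rw [hdiag i hi] at h3
      nlinarith [h3]
    have h4 := (Finset.sum_eq_zero_iff_of_nonneg
      (fun m _ => sq_nonneg (N m i))).mp h2 k (Finset.mem_erase.mpr ⟨hk, Finset.mem_univ k⟩)
    exact pow_eq_zero_iff (two_ne_zero) |>.mp h4
  have hrow : ∀ i, i ≠ j → ∀ k, k ≠ i → N i k = 0 := by
    intro i hi k hk
    have h1 := aux_sq_sum_row ho i
    have h2 : ∑ m ∈ Finset.univ.erase i, (N i m)^2 = 0 := by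
      have h3 := Finset.add_sum_erase Finset.univ (fun m => (N i m)^2) (Finset.mem_univ i)
      rw [h1] at h3
      beta_reduce at h3
      rw [hdiag i hi] at h3
      nlinarith [h3]
    have h4 := (Finset.sum_eq_zero_iff_of_nonneg
      (fun m _ => sq_nonneg (N i m))).mp h2 k (Finset.mem_erase.mpr ⟨hk, Finset.mem_univ k⟩)
    exact pow_eq_zero_iff (two_ne_zero) |>.mp h4
  have hdg : N = diagonal (fun i => if i = j then N j j else 1) := by
    ext k i
    by_cases hki : k = i
    · subst hki
      by_cases hij : k = j
      · subst hij; rw [Matrix.diagonal_apply_eq]; simp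
      · rw [Matrix.diagonal_apply_eq]
        simp only [if_neg hij]
        exact hdiag k hij
    · rw [Matrix.diagonal_apply_ne _ hki]
      by_cases hij : i = j
      · subst hij
        exact hrow k hki i (Ne.symm hki)
      · exact hcol i hij k hki
  have hdet2 : N.det = N j j := by
    rw [hdg, Matrix.det_diagonal]
    simp [Finset.prod_ite_eq']
  have hNjj : N j j = -1 := by rw [← hdet2]; exact hd
  rw [hdg]
  congr 1
  funext i
  by_cases hij : i = j <;> simp [hij, hNjj]

lemma aux_core (μ : Fin n → ℝ) (j : Fin n) (h0 : 0 ≤ μ j)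
    (hlt : ∀ i, i ≠ j → μ j < μ i) :
    ∃! N : Matrix (Fin n) (Fin n) ℝ, (Nᵀ * N = 1 ∧ N.det = -1) ∧
      ∀ N' : Matrix (Fin n) (Fin n) ℝ, N'ᵀ * N' = 1 → N'.det = -1 →
        (N' * diagonal μ).trace ≤ (N * diagonal μ).trace := by
  set χ : Fin n → ℝ := fun i => if i = j then -1 else 1 with hχ
  set N₀ := diagonal χ with hN₀
  have hN₀o : N₀ᵀ * N₀ = 1 := by
    have hχχ : χ * χ = 1 := by
      funext i
      by_cases hi : i = j <;> simp [hχ, hi]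
    rw [hN₀, Matrix.diagonal_transpose, Matrix.diagonal_mul_diagonal,
      show (fun i => χ i * χ i) = χ * χ from rfl, hχχ]
    exact Matrix.diagonal_one
  have hN₀d : N₀.det = -1 := by
    rw [hN₀, Matrix.det_diagonal]
    simp [hχ, Finset.prod_ite_eq']
  have hN₀diag : ∀ i, N₀ i i = χ i := fun i => Matrix.diagonal_apply_eq χ i
  have htr₀ : ∑ i, N₀ i i * μ i = (∑ i, μ i) - 2 * μ j := by
    have h1 : ∀ i, N₀ i i * μ i = μ i - (if i = j then 2 * μ j else 0) := by
      intro i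
      rw [hN₀diag]
      by_cases hi : i = j
      · subst hi; simp [hχ]; ring
      · simp [hχ, hi]
    rw [Finset.sum_congr rfl (fun i _ => h1 i), Finset.sum_sub_distrib]
    simp [Finset.sum_ite_eq']
  -- upper bound
  have hub : ∀ N' : Matrix (Fin n) (Fin n) ℝ, N'ᵀ * N' = 1 → N'.det = -1 →
      ∑ i, N' i i * μ i ≤ (∑ i, μ i) - 2 * μ j := by
    intro N' ho hd
    have h1 : ∀ i, N' i i * (μ i - μ j) ≤ μ i - μ j := by
      intro i
      rcases eq_or_ne i j with rfl | hi
      · simp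
      · have h2 := aux_diag_le_one ho i
        nlinarith [(hlt i hi).le]
    have htle : ∑ i, N' i i ≤ (n:ℝ) - 2 := aux_trace_le ho hd
    have b1 : ∑ i, N' i i * (μ i - μ j) ≤ ∑ i, (μ i - μ j) :=
      Finset.sum_le_sum (fun i _ => h1 i)
    have b2 : μ j * (∑ i, N' i i) ≤ μ j * ((n:ℝ) - 2) := mul_le_mul_of_nonneg_left htle h0
    have e : ∑ i, N' i i * μ i = (∑ i, N' i i * (μ i - μ j)) + μ j * (∑ i, N' i i) := by
      rw [Finset.mul_sum, ← Finset.sum_add_distrib]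
      apply Finset.sum_congr rfl
      intro i _; ring
    have hsumμ : ∑ i, (μ i - μ j) = (∑ i, μ i) - (n:ℝ) * μ j := by
      rw [Finset.sum_sub_distrib]
      simp [Finset.card_univ, mul_comm]
    have expand : μ j * ((n:ℝ) - 2) = (n:ℝ) * μ j - 2 * μ j := by ring
    rw [e]
    linarith [b1, b2, hsumμ, expand]
  refine ⟨N₀, ⟨⟨hN₀o, hN₀d⟩, ?_⟩, ?_⟩
  · intro N' ho hd
    rw [aux_trace_mul_diag, aux_trace_mul_diag, htr₀]
    exact hub N' ho hd
  · rintro N' ⟨⟨ho, hd⟩, hmax⟩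
    have hge := hmax N₀ hN₀o hN₀d
    rw [aux_trace_mul_diag, aux_trace_mul_diag, htr₀] at hge
    have hle := hub N' ho hd
    have heq : ∑ i, N' i i * μ i = (∑ i, μ i) - 2 * μ j := le_antisymm hle hge
    -- equality analysis
    have htle : ∑ i, N' i i ≤ (n:ℝ) - 2 := aux_trace_le ho hd
    have sum_split : ∑ i, (1 - N' i i) * (μ i - μ j)
        = ((∑ i, μ i) - 2 * μ j - (∑ i, N' i i * μ i))
          - μ j * (((n:ℝ) - 2) - ∑ i, N' i i) := by
      have h1 : ∀ i, (1 - N' i i) * (μ i - μ j)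
          = (μ i - N' i i * μ i) + μ j * (N' i i - 1) := fun i => by ring
      rw [Finset.sum_congr rfl (fun i _ => h1 i), Finset.sum_add_distrib,
        Finset.sum_sub_distrib, ← Finset.mul_sum, Finset.sum_sub_distrib,
        Finset.sum_const, Finset.card_univ, Fintype.card_fin]
      push_cast
      ring
    have hS1nonneg : ∀ i ∈ Finset.univ, (0:ℝ) ≤ (1 - N' i i) * (μ i - μ j) := by
      intro i _
      rcases eq_or_ne i j with rfl | hi
      · simp
      · have h2 := aux_diag_le_one ho i
        nlinarith [(hlt i hi).le]
    have hS1zero : ∑ i, (1 - N' i i) * (μ i - μ j) = 0 := by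
      have hle0 : ∑ i, (1 - N' i i) * (μ i - μ j) ≤ 0 := by
        rw [sum_split, heq]
        have : 0 ≤ μ j * (((n:ℝ) - 2) - ∑ i, N' i i) :=
          mul_nonneg h0 (by linarith)
        linarith
      have hge0 : 0 ≤ ∑ i, (1 - N' i i) * (μ i - μ j) :=
        Finset.sum_nonneg hS1nonneg
      linarith
    have hdiag : ∀ i, i ≠ j → N' i i = 1 := by
      intro i hi
      have h4 := (Finset.sum_eq_zero_iff_of_nonneg hS1nonneg).mp hS1zero i (Finset.mem_univ i)
      rcases mul_eq_zero.mp h4 with h5 | h5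
      · linarith
      · exact absurd h5 (by have := hlt i hi; intro h6; linarith)
    rw [hN₀, hχ]
    exact aux_rigid ho hd hdiag

lemma aux_svd (B V : Matrix (Fin n) (Fin n) ℝ) (μ : Fin n → ℝ)
    (hV : Vᵀ * V = 1)
    (hAA : (B * V)ᵀ * (B * V) = diagonal (fun i => μ i * μ i))
    (hdetB : B.det = -∏ i, μ i) :
    ∃ W : Matrix (Fin n) (Fin n) ℝ, Wᵀ * W = 1 ∧ W.det = -V.det ∧
      B = W * diagonal μ * Vᵀ := by
  have hVVT : V * Vᵀ = 1 := mul_eq_one_comm.mp hV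
  set A := B * V with hA_def
  have hBA : B = A * Vᵀ := by
    rw [hA_def, Matrix.mul_assoc, hVVT, Matrix.mul_one]
  have hdot : ∀ i l, ∑ k, A k i * A k l = if i = l then μ i * μ i else 0 := by
    intro i l
    have h1 := congrFun (congrFun hAA i) l
    simpa [Matrix.mul_apply, Matrix.diagonal_apply] using h1
  have hAcol0 : ∀ i, μ i = 0 → ∀ k, A k i = 0 := by
    intro i hi k
    have h1 := hdot i i
    rw [if_pos rfl, hi, mul_zero] at h1
    have h2 := (Finset.sum_eq_zero_iff_of_nonneg
      (fun m (_ : m ∈ Finset.univ) => mul_self_nonneg (A m i))).mp h1 k (Finset.mem_univ k)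
    nlinarith [h2]
  set w : Fin n → EuclideanSpace ℝ (Fin n) :=
    fun i => (μ i)⁻¹ • (WithLp.toLp 2 (fun k => A k i) : EuclideanSpace ℝ (Fin n)) with hw_def
  have hwk : ∀ i k, w i k = (μ i)⁻¹ * A k i := fun i k => rfl
  have hinner : ∀ i l, (inner ℝ (w i) (w l) : ℝ)
      = ((μ i)⁻¹ * (μ l)⁻¹) * (if i = l then μ i * μ i else 0) := by
    intro i l
    simp only [PiLp.inner_apply, RCLike.inner_apply, starRingEnd_apply, star_trivial, hwk]
    rw [← hdot i l, Finset.mul_sum]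
    apply Finset.sum_congr rfl
    intro k _; ring
  have hcard : Module.finrank ℝ (EuclideanSpace ℝ (Fin n)) = Fintype.card (Fin n) := by
    simp [finrank_euclideanSpace]
  have horth : Orthonormal ℝ (Set.restrict {i | μ i ≠ 0} w) := by
    constructor
    · rintro ⟨i, hi⟩
      have h1 : (inner ℝ (w i) (w i) : ℝ) = 1 := by
        rw [hinner i i, if_pos rfl]
        have hi' : μ i ≠ 0 := hi
        field_simp
      have h2 := real_inner_self_eq_norm_mul_norm (w i)
      rw [h1] at h2
      have h3 := norm_nonneg (w i)
      show ‖w i‖ = 1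
      nlinarith
    · rintro ⟨i, hi⟩ ⟨l, hl⟩ hil
      have hilne : i ≠ l := fun h => hil (Subtype.ext h)
      show (inner ℝ (w i) (w l) : ℝ) = 0
      rw [hinner i l, if_neg hilne, mul_zero]
  obtain ⟨b, hb⟩ := horth.exists_orthonormalBasis_extension_of_card_eq hcard
  set W₀ : Matrix (Fin n) (Fin n) ℝ := Matrix.of fun k i => b i k with hW₀_def
  have hW₀o : W₀ᵀ * W₀ = 1 := aux_basis_matrix
  have hW₀D : W₀ * diagonal μ = A := by
    ext k i
    rw [Matrix.mul_diagonal]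
    by_cases hi : μ i = 0
    · rw [hi, mul_zero, hAcol0 i hi k]
    · have h1 : b i = w i := hb i hi
      show W₀ k i * μ i = A k i
      rw [hW₀_def]
      show b i k * μ i = A k i
      rw [h1, hwk]
      field_simp
  have hdetprod : W₀.det * ∏ i, μ i = B.det * V.det := by
    rw [← Matrix.det_diagonal (d := μ), ← Matrix.det_mul, hW₀D, hA_def, Matrix.det_mul]
  have hVV2 : V.det * V.det = 1 := by
    have := congrArg Matrix.det hV
    rwa [Matrix.det_mul, Matrix.det_transpose, Matrix.det_one] at this
  have hWW2 : W₀.det * W₀.det = 1 := by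
    have := congrArg Matrix.det hW₀o
    rwa [Matrix.det_mul, Matrix.det_transpose, Matrix.det_one] at this
  by_cases hw : W₀.det = -V.det
  · refine ⟨W₀, hW₀o, hw, ?_⟩
    rw [hBA, hW₀D]
  · have hz : ∏ i, μ i = 0 := by
      by_contra hnz
      apply hw
      have h1 : W₀.det * ∏ i, μ i = (-V.det) * ∏ i, μ i := by
        rw [hdetprod, hdetB]; ring
      exact mul_right_cancel₀ hnz h1
    obtain ⟨j₀, _, hj₀⟩ := Finset.prod_eq_zero_iff.mp hz
    have hWdV : W₀.det = V.det := by
      rcases mul_self_eq_one_iff.mp hWW2 with h1 | h1 <;>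
        rcases mul_self_eq_one_iff.mp hVV2 with h2 | h2
      · rw [h1, h2]
      · exact absurd (by rw [h1, h2]; try norm_num) hw
      · exact absurd (by rw [h1, h2]; try norm_num) hw
      · rw [h1, h2]
    set χ₀ : Fin n → ℝ := fun i => if i = j₀ then -1 else 1 with hχ₀
    have hχχ : χ₀ * χ₀ = 1 := by
      funext i
      by_cases hi : i = j₀ <;> simp [hχ₀, hi]
    refine ⟨W₀ * diagonal χ₀, ?_, ?_, ?_⟩
    · calc (W₀ * diagonal χ₀)ᵀ * (W₀ * diagonal χ₀)
          = (diagonal χ₀)ᵀ * (W₀ᵀ * W₀) * diagonal χ₀ := by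
            simp only [Matrix.transpose_mul, Matrix.mul_assoc]
        _ = diagonal χ₀ * diagonal χ₀ := by
            rw [hW₀o, Matrix.mul_one, Matrix.diagonal_transpose]
        _ = 1 := by
            rw [Matrix.diagonal_mul_diagonal,
              show (fun i => χ₀ i * χ₀ i) = χ₀ * χ₀ from rfl, hχχ]
            exact Matrix.diagonal_one
    · rw [Matrix.det_mul, Matrix.det_diagonal, hWdV]
      simp [hχ₀, Finset.prod_ite_eq']
    · have hWD : W₀ * diagonal χ₀ * diagonal μ = A := by
        rw [Matrix.mul_assoc, Matrix.diagonal_mul_diagonal]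
        rw [show (fun i => χ₀ i * μ i) = μ by
          funext i
          by_cases hi : i = j₀
          · subst hi; rw [hj₀]; simp
          · simp [hχ₀, hi]]
        exact hW₀D
      rw [hBA, hWD]

lemma aux_mul_cancel {X : Matrix (Fin n) (Fin n) ℝ} (h : Xᵀ * X = 1)
    (Y Z : Matrix (Fin n) (Fin n) ℝ) : Y * Xᵀ * (X * Z) = Y * Z := by
  calc Y * Xᵀ * (X * Z) = Y * (Xᵀ * X) * Z := by simp only [Matrix.mul_assoc]
    _ = Y * Z := by rw [h, Matrix.mul_one]

lemma aux_star_eq_transpose (M : Matrix (Fin n) (Fin n) ℝ) : star M = Mᵀ := by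
  ext i k
  simp [Matrix.star_apply]

end

open Matrix

set_option maxHeartbeats 1000000 in
/-- Uniqueness part of the paper's Proposition 1 (case `det B ≤ 0`): if the
smallest eigenvalue of `R` (the positive semidefinite square root of `Bᵀ B`)
has multiplicity 1, then there is exactly one maximizer of `Q ↦ trace(Qᵀ B)`
over `SO(n)`. -/
theorem stmt10 {n : ℕ}
    (B R : Matrix (Fin n) (Fin n) ℝ) (hdet : B.det ≤ 0)
    (hR : R.PosSemidef) (hRR : R * R = Bᵀ * B) (lammin : ℝ)
    (hmin : IsLeast {μ : ℝ | ∃ v : Fin n → ℝ, v ≠ 0 ∧ R.mulVec v = μ • v} lammin)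
    (hmult : Module.finrank ℝ
      (LinearMap.ker (R - lammin • (1 : Matrix (Fin n) (Fin n) ℝ)).mulVecLin) = 1) :
    ∃! Q : Matrix (Fin n) (Fin n) ℝ, (Qᵀ * Q = 1 ∧ Q.det = 1) ∧
      ∀ Q' : Matrix (Fin n) (Fin n) ℝ, Q'ᵀ * Q' = 1 → Q'.det = 1 →
        (Q'ᵀ * B).trace ≤ (Qᵀ * B).trace := by
  classical
  have hH : R.IsHermitian := hR.1
  set μ : Fin n → ℝ := hH.eigenvalues with hμ_def
  set b := hH.eigenvectorBasis with hb_def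
  set V : Matrix (Fin n) (Fin n) ℝ := (hH.eigenvectorUnitary : Matrix (Fin n) (Fin n) ℝ)
    with hV_def
  have hV : Vᵀ * V = 1 := by
    have h1 := (Matrix.mem_unitaryGroup_iff').mp hH.eigenvectorUnitary.2
    rwa [aux_star_eq_transpose] at h1
  have hVVT : V * Vᵀ = 1 := mul_eq_one_comm.mp hV
  have hspec : R = V * diagonal μ * Vᵀ := by
    have h1 := hH.spectral_theorem
    rw [Unitary.conjStarAlgAut_apply] at h1
    rwa [aux_star_eq_transpose, RCLike.ofReal_real_eq_id, Function.id_comp] at h1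
  -- eigen facts
  have hbne : ∀ i, (⇑(b i) : Fin n → ℝ) ≠ 0 := by
    intro i h
    have h1 := b.orthonormal.1 i
    rw [show b i = (0 : EuclideanSpace ℝ (Fin n)) from by ext k; exact congrFun h k] at h1
    simp at h1
  have hle : ∀ i, lammin ≤ μ i := by
    intro i
    exact hmin.2 ⟨⇑(b i), hbne i, hH.mulVec_eigenvectorBasis i⟩
  have hμnn : ∀ i, 0 ≤ μ i := hR.eigenvalues_nonneg
  -- a diagonal-minus-scalar identity
  have hdiagsub : ∀ lam : ℝ, R - lam • (1 : Matrix (Fin n) (Fin n) ℝ)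
      = V * diagonal (fun i => μ i - lam) * Vᵀ := by
    intro lam
    have h1 : diagonal (fun i => μ i - lam) = diagonal μ - lam • 1 := by
      ext i k
      by_cases h : i = k
      · subst h; simp [Matrix.diagonal_apply_eq, Matrix.one_apply]
      · simp [Matrix.diagonal_apply_ne _ h, Matrix.one_apply, h]
    rw [h1, Matrix.mul_sub, Matrix.sub_mul, ← hspec]
    congr 1
    rw [Matrix.mul_smul, Matrix.mul_one, Matrix.smul_mul, hVVT]
  -- lammin is an eigenvalue μ j
  have hex : ∃ j, μ j = lammin := by
    by_contra hcon
    push_neg at hcon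
    obtain ⟨v, hv0, hv⟩ := hmin.1
    have hker : (R - lammin • 1) *ᵥ v = 0 := by
      rw [Matrix.sub_mulVec, Matrix.smul_mulVec, Matrix.one_mulVec, hv, sub_self]
    have hdet0 : (R - lammin • (1 : Matrix (Fin n) (Fin n) ℝ)).det = 0 :=
      (Matrix.exists_mulVec_eq_zero_iff).mp ⟨v, hv0, hker⟩
    have hdetne : (R - lammin • (1 : Matrix (Fin n) (Fin n) ℝ)).det ≠ 0 := by
      rw [hdiagsub lammin, Matrix.det_mul, Matrix.det_mul, Matrix.det_diagonal,
        Matrix.det_transpose]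
      have hVV2 : V.det * V.det = 1 := by
        have := congrArg Matrix.det hV
        rwa [Matrix.det_mul, Matrix.det_transpose, Matrix.det_one] at this
      have hprod : (∏ i, (μ i - lammin)) ≠ 0 :=
        Finset.prod_ne_zero_iff.mpr (fun i _ => sub_ne_zero.mpr (hcon i))
      intro h
      rcases mul_eq_zero.mp h with h1 | h1
      · rcases mul_eq_zero.mp h1 with h2 | h2
        · nlinarith [hVV2]
        · exact hprod h2
      · nlinarith [hVV2]
    exact hdetne hdet0
  obtain ⟨j, hj⟩ := hex
  -- strictness via multiplicity
  have hlt : ∀ i, i ≠ j → μ j < μ i := by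
    intro i hi
    rcases lt_or_eq_of_le (hj ▸ hle i) with h | h
    · exact hj ▸ h
    · exfalso
      -- two orthonormal eigenvectors in the kernel
      have hmem : ∀ l, μ l = lammin →
          (⇑(b l) : Fin n → ℝ) ∈ LinearMap.ker (R - lammin • (1 : Matrix (Fin n) (Fin n) ℝ)).mulVecLin := by
        intro l hl
        rw [LinearMap.mem_ker, Matrix.mulVecLin_apply, Matrix.sub_mulVec,
          Matrix.smul_mulVec, Matrix.one_mulVec, hH.mulVec_eigenvectorBasis l,
          show hH.eigenvalues l = lammin from hl]
        exact sub_self _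
      have hdotb : ∀ l m, ∑ k, b l k * b m k = if l = m then (1:ℝ) else 0 := by
        intro l m
        have h1 := b.orthonormal
        rw [orthonormal_iff_ite] at h1
        have h2 := h1 l m
        simpa [PiLp.inner_apply, RCLike.inner_apply, starRingEnd_apply, star_trivial, mul_comm] using h2
      set K := LinearMap.ker (R - lammin • (1 : Matrix (Fin n) (Fin n) ℝ)).mulVecLin with hK
      set x : K := ⟨⇑(b i), hmem i (h.symm ▸ hj ▸ rfl)⟩ with hx
      set y : K := ⟨⇑(b j), hmem j hj⟩ with hy
      have hli : LinearIndependent ℝ ![x, y] := by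
        rw [LinearIndependent.pair_iff]
        intro s t hst
        have hst2 : s • (⇑(b i) : Fin n → ℝ) + t • ⇑(b j) = 0 := by
          have := congrArg (Submodule.subtype K) hst
          simpa [hx, hy] using this
        constructor
        · have h1 : ∑ k, (s • (⇑(b i) : Fin n → ℝ) + t • ⇑(b j)) k * b i k = s := by
            have h2 : ∀ k, (s • (⇑(b i) : Fin n → ℝ) + t • ⇑(b j)) k * b i k
                = s * (b i k * b i k) + t * (b j k * b i k) := by
              intro k; simp [Pi.add_apply, Pi.smul_apply]; ring
            rw [Finset.sum_congr rfl (fun k _ => h2 k), Finset.sum_add_distrib,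
              ← Finset.mul_sum, ← Finset.mul_sum, hdotb i i, hdotb j i,
              if_pos rfl, if_neg (Ne.symm hi)]
            ring
          rw [hst2] at h1
          simpa using h1.symm
        · have h1 : ∑ k, (s • (⇑(b i) : Fin n → ℝ) + t • ⇑(b j)) k * b j k = t := by
            have h2 : ∀ k, (s • (⇑(b i) : Fin n → ℝ) + t • ⇑(b j)) k * b j k
                = s * (b i k * b j k) + t * (b j k * b j k) := by
              intro k; simp [Pi.add_apply, Pi.smul_apply]; ring
            rw [Finset.sum_congr rfl (fun k _ => h2 k), Finset.sum_add_distrib,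
              ← Finset.mul_sum, ← Finset.mul_sum, hdotb i j, hdotb j j,
              if_pos rfl, if_neg hi]
            ring
          rw [hst2] at h1
          simpa using h1.symm
      have hcard := hli.fintype_card_le_finrank
      rw [hmult] at hcard
      simp at hcard
  -- determinant of B
  have hVV2 : V.det * V.det = 1 := by
    have := congrArg Matrix.det hV
    rwa [Matrix.det_mul, Matrix.det_transpose, Matrix.det_one] at this
  have hdetR : R.det = ∏ i, μ i := by
    rw [hspec, Matrix.det_mul, Matrix.det_mul, Matrix.det_diagonal, Matrix.det_transpose]
    linear_combination (∏ i, μ i) * hVV2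
  have hprodnn : 0 ≤ ∏ i, μ i := Finset.prod_nonneg (fun i _ => hμnn i)
  have hdetB : B.det = -∏ i, μ i := by
    have hBsq : B.det * B.det = (∏ i, μ i) * (∏ i, μ i) := by
      have h1 := congrArg Matrix.det hRR
      rw [Matrix.det_mul, Matrix.det_mul, Matrix.det_transpose, hdetR] at h1
      exact h1.symm
    have h2 : (B.det + ∏ i, μ i) * (B.det - ∏ i, μ i) = 0 := by linear_combination hBsq
    rcases mul_eq_zero.mp h2 with h3 | h3
    · linarith
    · linarith
  -- SVD
  have hAA : (B * V)ᵀ * (B * V) = diagonal (fun i => μ i * μ i) := by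
    have hRV : R * V = V * diagonal μ := by
      rw [hspec]
      calc V * diagonal μ * Vᵀ * V = V * diagonal μ * (Vᵀ * V) := by
            simp only [Matrix.mul_assoc]
        _ = V * diagonal μ := by rw [hV, Matrix.mul_one]
    calc (B * V)ᵀ * (B * V) = Vᵀ * (Bᵀ * B) * V := by
          simp only [Matrix.transpose_mul, Matrix.mul_assoc]
      _ = Vᵀ * (R * (R * V)) := by rw [← hRR]; simp only [Matrix.mul_assoc]
      _ = Vᵀ * (R * (V * diagonal μ)) := by rw [hRV]
      _ = Vᵀ * (R * V * diagonal μ) := by simp only [Matrix.mul_assoc]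
      _ = Vᵀ * (V * diagonal μ * diagonal μ) := by rw [hRV]
      _ = Vᵀ * V * (diagonal μ * diagonal μ) := by simp only [Matrix.mul_assoc]
      _ = diagonal (fun i => μ i * μ i) := by
          rw [hV, Matrix.one_mul, Matrix.diagonal_mul_diagonal]
  obtain ⟨W, hWo, hWd, hBW⟩ := aux_svd B V μ hV hAA hdetB
  have hWWT : W * Wᵀ = 1 := mul_eq_one_comm.mp hWo
  -- the diagonal optimization problem
  obtain ⟨N₀, ⟨⟨hN₀o, hN₀d⟩, hN₀max⟩, hN₀uniq⟩ :=
    aux_core μ j (hμnn j) (fun i hi => hlt i hi)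
  -- correspondence
  have key : ∀ N : Matrix (Fin n) (Fin n) ℝ,
      ((W * Nᵀ * Vᵀ)ᵀ * B).trace = (N * diagonal μ).trace := by
    intro N
    have e1 : (W * Nᵀ * Vᵀ)ᵀ * B = V * N * diagonal μ * Vᵀ := by
      rw [hBW]
      calc (W * Nᵀ * Vᵀ)ᵀ * (W * diagonal μ * Vᵀ)
          = V * N * Wᵀ * (W * (diagonal μ * Vᵀ)) := by
            simp only [Matrix.transpose_mul, Matrix.transpose_transpose, Matrix.mul_assoc]
        _ = V * N * (diagonal μ * Vᵀ) := aux_mul_cancel hWo _ _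
        _ = V * N * diagonal μ * Vᵀ := by simp only [Matrix.mul_assoc]
    rw [e1]
    calc (V * N * diagonal μ * Vᵀ).trace = (Vᵀ * (V * (N * diagonal μ))).trace := by
          rw [Matrix.trace_mul_comm]
          simp only [Matrix.mul_assoc]
      _ = ((Vᵀ * V) * (N * diagonal μ)).trace := by simp only [Matrix.mul_assoc]
      _ = (N * diagonal μ).trace := by rw [hV, Matrix.one_mul]
  have hSO : ∀ N : Matrix (Fin n) (Fin n) ℝ, Nᵀ * N = 1 → N.det = -1 →
      (W * Nᵀ * Vᵀ)ᵀ * (W * Nᵀ * Vᵀ) = 1 ∧ (W * Nᵀ * Vᵀ).det = 1 := by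
    intro N hNo hNd
    have hNNT : N * Nᵀ = 1 := mul_eq_one_comm.mp hNo
    constructor
    · calc (W * Nᵀ * Vᵀ)ᵀ * (W * Nᵀ * Vᵀ)
          = V * N * Wᵀ * (W * (Nᵀ * Vᵀ)) := by
            simp only [Matrix.transpose_mul, Matrix.transpose_transpose, Matrix.mul_assoc]
        _ = V * N * (Nᵀ * Vᵀ) := aux_mul_cancel hWo _ _
        _ = V * (N * Nᵀ) * Vᵀ := by simp only [Matrix.mul_assoc]
        _ = 1 := by rw [hNNT, Matrix.mul_one, hVVT]
    · rw [Matrix.det_mul, Matrix.det_mul, Matrix.det_transpose, Matrix.det_transpose,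
        hWd, hNd]
      nlinarith [hVV2]
  have hON : ∀ Q : Matrix (Fin n) (Fin n) ℝ, Qᵀ * Q = 1 → Q.det = 1 →
      (Vᵀ * Qᵀ * W)ᵀ * (Vᵀ * Qᵀ * W) = 1 ∧ (Vᵀ * Qᵀ * W).det = -1 ∧
        W * (Vᵀ * Qᵀ * W)ᵀ * Vᵀ = Q := by
    intro Q hQo hQd
    have hQQT : Q * Qᵀ = 1 := mul_eq_one_comm.mp hQo
    have hNt : (Vᵀ * Qᵀ * W)ᵀ = Wᵀ * Q * V := by
      simp only [Matrix.transpose_mul, Matrix.transpose_transpose, Matrix.mul_assoc]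
    refine ⟨?_, ?_, ?_⟩
    · rw [hNt]
      calc Wᵀ * Q * V * (Vᵀ * Qᵀ * W)
          = Wᵀ * Q * (Vᵀ)ᵀ * (Vᵀ * (Qᵀ * W)) := by
            rw [Matrix.transpose_transpose, Matrix.mul_assoc Vᵀ Qᵀ W]
        _ = Wᵀ * Q * (Qᵀ * W) := aux_mul_cancel (by rw [Matrix.transpose_transpose]; exact hVVT) _ _
        _ = Wᵀ * (Qᵀ)ᵀ * (Qᵀ * W) := by rw [Matrix.transpose_transpose]
        _ = Wᵀ * W := aux_mul_cancel (by rw [Matrix.transpose_transpose]; exact hQQT) _ _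
        _ = 1 := hWo
    · rw [Matrix.det_mul, Matrix.det_mul, Matrix.det_transpose, Matrix.det_transpose,
        hQd, hWd]
      nlinarith [hVV2]
    · rw [hNt]
      calc W * (Wᵀ * Q * V) * Vᵀ = W * Wᵀ * (Q * (V * Vᵀ)) := by
            simp only [Matrix.mul_assoc]
        _ = Q := by rw [hVVT, Matrix.mul_one, hWWT, Matrix.one_mul]
  -- assemble
  refine ⟨W * N₀ᵀ * Vᵀ, ⟨hSO N₀ hN₀o hN₀d, ?_⟩, ?_⟩
  · intro Q' hQ'o hQ'd
    obtain ⟨hN'o, hN'd, hN'rec⟩ := hON Q' hQ'o hQ'd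
    have h1 : (Q'ᵀ * B).trace = ((Vᵀ * Q'ᵀ * W) * diagonal μ).trace := by
      have h2 := key (Vᵀ * Q'ᵀ * W)
      rw [hN'rec] at h2
      exact h2
    rw [h1, key N₀]
    exact hN₀max _ hN'o hN'd
  · intro Q' ⟨⟨hQ'o, hQ'd⟩, hmax'⟩
    obtain ⟨hN'o, hN'd, hN'rec⟩ := hON Q' hQ'o hQ'd
    have h1 : (Q'ᵀ * B).trace = ((Vᵀ * Q'ᵀ * W) * diagonal μ).trace := by
      have h2 := key (Vᵀ * Q'ᵀ * W)
      rw [hN'rec] at h2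
      exact h2
    have hN'max : ∀ N'' : Matrix (Fin n) (Fin n) ℝ, N''ᵀ * N'' = 1 → N''.det = -1 →
        (N'' * diagonal μ).trace ≤ ((Vᵀ * Q'ᵀ * W) * diagonal μ).trace := by
      intro N'' hN''o hN''d
      obtain ⟨hQ''o, hQ''d⟩ := hSO N'' hN''o hN''d
      have h3 := hmax' (W * N''ᵀ * Vᵀ) hQ''o hQ''d
      rw [key N''] at h3
      rw [← h1]
      exact h3
    have hNeq : (Vᵀ * Q'ᵀ * W) = N₀ := hN₀uniq _ ⟨⟨hN'o, hN'd⟩, hN'max⟩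
    rw [← hN'rec, hNeq]
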